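/- Let X be a locally compact space and K ⊆ X quasi-compact. Then the set L = {S ∈ HX : S ∩ K ≠ ∅} is compact in HX. Consequently HX is locally compact, and ĤX = HX ∪ {∅} is the one-point compactification of HX; moreover HX is σ-compact whenever X is σ-compact. -/

import Mathlib

open Set Topology

/-- A space is locally compact in the sense of the paper if every point has a
compact (quasi-compact and Hausdorff) neighborhood. -/
def LocCompact (X : Type*) [TopologicalSpace X] : Prop :=
  ∀ x : X, ∃ K : Set X, K ∈ nhds x ∧ IsCompact K ∧ T2Space K

/-- The finite-intersection condition defining membership in `HX`. -/
def HXcond {X : Type*} [TopologicalSpace X] (S : Set X) : Prop :=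
  ∀ I : Finset (Set X), (∀ V ∈ I, IsOpen V ∧ (S ∩ V).Nonempty) →
    (⋂₀ (I : Set (Set X))).Nonempty

/-- The space `HX` of nonempty subsets of `X` satisfying the finite-intersection
condition. -/
def HXsp (X : Type*) [TopologicalSpace X] : Type _ :=
  {S : Set X // S.Nonempty ∧ HXcond S}

/-- The space `ĤX = HX ∪ {∅}`. -/
def hatHX (X : Type*) [TopologicalSpace X] : Type _ :=
  {S : Set X // S = ∅ ∨ (S.Nonempty ∧ HXcond S)}

/-- The topology on `HX` generated by `Ω_V` (`V` open) and `Ω^Q` (`Q` quasi-compact). -/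
instance (X : Type*) [TopologicalSpace X] : TopologicalSpace (HXsp X) :=
  TopologicalSpace.generateFrom
    ({A | ∃ V : Set X, IsOpen V ∧ A = {S : HXsp X | (S.1 ∩ V).Nonempty}} ∪
     {A | ∃ Q : Set X, IsCompact Q ∧ A = {S : HXsp X | S.1 ∩ Q = ∅}})

/-- The analogous topology on `ĤX`. -/
instance (X : Type*) [TopologicalSpace X] : TopologicalSpace (hatHX X) :=
  TopologicalSpace.generateFrom
    ({A | ∃ V : Set X, IsOpen V ∧ A = {S : hatHX X | (S.1 ∩ V).Nonempty}} ∪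
     {A | ∃ Q : Set X, IsCompact Q ∧ A = {S : hatHX X | S.1 ∩ Q = ∅}})

open Filter TopologicalSpace OnePoint
set_option linter.unusedSectionVars false

section Generic

variable {X : Type*} [TopologicalSpace X] {α : Type*} (p : α → Set X) (F : Ultrafilter α)

/-- The candidate limit set of an ultrafilter. -/
def limS : Set X := {x | ∀ V : Set X, IsOpen V → x ∈ V → {S | (p S ∩ V).Nonempty} ∈ F}

lemma compl_meet (Q : Set X) : {S : α | (p S ∩ Q).Nonempty}ᶜ = {S | p S ∩ Q = ∅} := by
  ext S; simp [not_nonempty_iff_eq_empty]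

lemma limS_avoid {Q : Set X} (hQ : IsCompact Q) (h : ∀ x ∈ Q, x ∉ limS p F) :
    {S | p S ∩ Q = ∅} ∈ F := by
  have key : ∀ x ∈ Q, ∃ V : Set X, IsOpen V ∧ x ∈ V ∧ {S | p S ∩ V = ∅} ∈ F := by
    intro x hx
    have hx' := h x hx
    simp only [limS, mem_setOf_eq, not_forall] at hx'
    obtain ⟨V, hVo, hxV, hVF⟩ := hx'
    refine ⟨V, hVo, hxV, ?_⟩
    have := (Ultrafilter.compl_mem_iff_notMem (f := F)).2 hVF
    rwa [compl_meet] at this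
  choose V hVo hxV hVF using key
  obtain ⟨t, ht⟩ := hQ.elim_nhds_subcover' V (fun x hx => (hVo x hx).mem_nhds (hxV x hx))
  have hmem : (⋂ x ∈ t, {S : α | p S ∩ V x x.2 = ∅}) ∈ F :=
    (Filter.biInter_finset_mem t).2 fun x _ => hVF x x.2
  refine mem_of_superset hmem ?_
  intro S hS
  show p S ∩ Q = ∅
  rw [eq_empty_iff_forall_notMem]
  rintro y ⟨hyS, hyQ⟩
  obtain ⟨x, hxt, hyV⟩ := mem_iUnion₂.mp (ht hyQ)
  have : p S ∩ V x x.2 = ∅ := by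
    have := mem_iInter₂.mp hS x hxt; exact this
  have : y ∈ p S ∩ V ↑x x.2 := ⟨hyS, hyV⟩
  rw [‹p S ∩ V ↑x x.2 = ∅›] at this
  exact this

lemma limS_meet {Q : Set X} (hQ : IsCompact Q) (hF : {S | (p S ∩ Q).Nonempty} ∈ F) :
    (limS p F ∩ Q).Nonempty := by
  by_contra h
  rw [not_nonempty_iff_eq_empty, eq_empty_iff_forall_notMem] at h
  have h2 := limS_avoid p F hQ (fun x hxQ hxL => h x ⟨hxL, hxQ⟩)
  rw [← compl_meet] at h2
  exact (Ultrafilter.compl_mem_iff_notMem.mp h2) hF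

lemma limS_cond (hP : ∀ S : α, (p S).Nonempty → HXcond (p S)) (hne : (limS p F).Nonempty) :
    HXcond (limS p F) := by
  intro I hI
  have hmem : (⋂ V ∈ I, {S : α | (p S ∩ V).Nonempty}) ∈ F := by
    refine (Filter.biInter_finset_mem I).2 fun V hV => ?_
    obtain ⟨hVo, x, hxL, hxV⟩ := hI V hV
    exact hxL V hVo hxV
  obtain ⟨S, hS⟩ := Ultrafilter.nonempty_of_mem hmem
  have hS' : ∀ V ∈ I, (p S ∩ V).Nonempty := fun V hV => mem_iInter₂.mp hS V hV
  rcases I.eq_empty_or_nonempty with rfl | ⟨V₀, hV₀⟩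
  · obtain ⟨x, _⟩ := hne
    simpa using ⟨x, mem_univ x⟩
  · have hSne : (p S).Nonempty := ((hS' V₀ hV₀).mono inter_subset_left)
    exact hP S hSne I (fun V hV => ⟨(hI V hV).1, hS' V hV⟩)

end Generic

section Sep

variable {X : Type*} [TopologicalSpace X]

lemma shrink (hX : LocCompact X) {x : X} {V : Set X} (hV : IsOpen V) (hx : x ∈ V) :
    ∃ Q : Set X, IsCompact Q ∧ Q ∈ 𝓝 x ∧ Q ⊆ V := by
  obtain ⟨K, hKn, hKc, hKt2⟩ := hX x
  haveI : CompactSpace K := isCompact_iff_compactSpace.mp hKc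
  haveI := hKt2
  set x' : K := ⟨x, mem_of_mem_nhds hKn⟩
  have hV' : (Subtype.val ⁻¹' V : Set K) ∈ 𝓝 x' :=
    continuous_subtype_val.continuousAt.preimage_mem_nhds (hV.mem_nhds hx)
  obtain ⟨s, hs_n, hs_sub, hs_c⟩ := local_compact_nhds hV'
  refine ⟨Subtype.val '' s, hs_c.image continuous_subtype_val, ?_, ?_⟩
  · have h1 : Subtype.val '' s ∈ map (Subtype.val : K → X) (𝓝 x') := image_mem_map hs_n
    rwa [map_nhds_subtype_val, nhdsWithin_eq_nhds.mpr hKn] at h1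
  · rintro y ⟨z, hz, rfl⟩; exact hs_sub hz

lemma closed_of_cond (hX : LocCompact X) {S : Set X} (h : HXcond S) : IsClosed S := by
  classical
  rw [← closure_subset_iff_isClosed]
  intro x hx
  by_contra hxS
  obtain ⟨K, hKn, hKc, hKt2⟩ := hX x
  haveI := hKt2
  have hxK : x ∈ interior K := mem_interior_iff_mem_nhds.2 hKn
  obtain ⟨y, hyK, hyS⟩ : (interior K ∩ S).Nonempty := by
    have := mem_closure_iff.mp hx (interior K) isOpen_interior hxK
    exact this
  have hxy : x ≠ y := fun hh => hxS (hh ▸ hyS)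
  set xK : K := ⟨x, interior_subset hxK⟩
  set yK : K := ⟨y, interior_subset hyK⟩
  obtain ⟨A, B, hA, hB, hxA, hyB, hAB⟩ :=
    t2_separation (show xK ≠ yK from fun hh => hxy (congrArg Subtype.val hh))
  obtain ⟨A', hA', rfl⟩ := isOpen_induced_iff.mp hA
  obtain ⟨B', hB', rfl⟩ := isOpen_induced_iff.mp hB
  set V := A' ∩ interior K with hVdef
  set W := B' ∩ interior K with hWdef
  have hxV : x ∈ V := ⟨hxA, hxK⟩
  have hyW : y ∈ W := ⟨hyB, hyK⟩
  have hVS : (S ∩ V).Nonempty := by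
    obtain ⟨z, hz1, hz2⟩ := mem_closure_iff.mp hx V (hA'.inter isOpen_interior) hxV
    exact ⟨z, hz2, hz1⟩
  have hWS : (S ∩ W).Nonempty := ⟨y, hyS, hyW⟩
  obtain ⟨z, hz⟩ := h {V, W} (by
    intro U hU
    rcases Finset.mem_insert.mp hU with rfl | hU
    · exact ⟨hA'.inter isOpen_interior, hVS⟩
    · rw [Finset.mem_singleton] at hU; subst hU
      exact ⟨hB'.inter isOpen_interior, hWS⟩)
  have hzV : z ∈ V := hz V (by simp)
  have hzW : z ∈ W := hz W (by simp)
  have hzK : (⟨z, interior_subset hzV.2⟩ : K) ∈ (Subtype.val ⁻¹' A') ∩ (Subtype.val ⁻¹' B') :=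
    ⟨hzV.1, hzW.1⟩
  exact (hAB.le_bot hzK).elim

variable {α : Type*} [TopologicalSpace α] (p : α → Set X)

lemma sep_of
    (hopV : ∀ V : Set X, IsOpen V → IsOpen {S : α | (p S ∩ V).Nonempty})
    (hopQ : ∀ Q : Set X, IsCompact Q → IsOpen {S : α | p S ∩ Q = ∅})
    (hX : LocCompact X) {S T : α} {x : X} (hxS : x ∈ p S) (hT : IsClosed (p T))
    (hxT : x ∉ p T) :
    ∃ U₁ U₂ : Set α, IsOpen U₁ ∧ IsOpen U₂ ∧ S ∈ U₁ ∧ T ∈ U₂ ∧ Disjoint U₁ U₂ := by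
  obtain ⟨Q, hQc, hQn, hQsub⟩ := shrink hX hT.isOpen_compl hxT
  refine ⟨{S' | (p S' ∩ interior Q).Nonempty}, {S' | p S' ∩ Q = ∅},
    hopV _ isOpen_interior, hopQ _ hQc,
    ⟨x, hxS, mem_interior_iff_mem_nhds.2 hQn⟩, ?_, ?_⟩
  · show p T ∩ Q = ∅
    rw [eq_empty_iff_forall_notMem]
    rintro y ⟨hy1, hy2⟩
    exact hQsub hy2 hy1
  · rw [Set.disjoint_left]
    rintro S' ⟨y, hy1, hy2⟩ h2
    have : y ∈ p S' ∩ Q := ⟨hy1, interior_subset hy2⟩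
    rw [show p S' ∩ Q = ∅ from h2] at this
    exact this

lemma t2_of (hinj : Function.Injective p)
    (hopV : ∀ V : Set X, IsOpen V → IsOpen {S : α | (p S ∩ V).Nonempty})
    (hopQ : ∀ Q : Set X, IsCompact Q → IsOpen {S : α | p S ∩ Q = ∅})
    (hX : LocCompact X) (hcl : ∀ S : α, IsClosed (p S)) : T2Space α := by
  constructor
  intro S T hST
  have hne : p S ≠ p T := fun h => hST (hinj h)
  by_cases hsub : p S ⊆ p T
  · have h2 : ¬ p T ⊆ p S := fun h => hne (Subset.antisymm hsub h)
    obtain ⟨x, hxT, hxS⟩ := not_subset.mp h2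
    obtain ⟨U₁, U₂, h1, h2, h3, h4, h5⟩ := sep_of p hopV hopQ hX hxT (hcl S) hxS
    exact ⟨U₂, U₁, h2, h1, h4, h3, h5.symm⟩
  · obtain ⟨x, hxS, hxT⟩ := not_subset.mp hsub
    obtain ⟨U₁, U₂, h1, h2, h3, h4, h5⟩ := sep_of p hopV hopQ hX hxS (hcl T) hxT
    exact ⟨U₁, U₂, h1, h2, h3, h4, h5⟩

lemma ultra_le_nhds (F : Ultrafilter α) (a : α)
    (hgen : ∀ U : Set α, IsOpen U → TopologicalSpace.GenerateOpen
      ({A | ∃ V : Set X, IsOpen V ∧ A = {S : α | (p S ∩ V).Nonempty}} ∪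
       {A | ∃ Q : Set X, IsCompact Q ∧ A = {S : α | p S ∩ Q = ∅}}) U)
    (h1 : ∀ V : Set X, IsOpen V → (p a ∩ V).Nonempty → {S : α | (p S ∩ V).Nonempty} ∈ F)
    (h2 : ∀ Q : Set X, IsCompact Q → p a ∩ Q = ∅ → {S : α | p S ∩ Q = ∅} ∈ F) :
    ↑F ≤ 𝓝 a := by
  have key : ∀ U : Set α, TopologicalSpace.GenerateOpen
      ({A | ∃ V : Set X, IsOpen V ∧ A = {S : α | (p S ∩ V).Nonempty}} ∪
       {A | ∃ Q : Set X, IsCompact Q ∧ A = {S : α | p S ∩ Q = ∅}}) U → a ∈ U → U ∈ F := by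
    intro U hU
    induction hU with
    | basic s hs =>
      intro ha
      rcases hs with ⟨V, hVo, rfl⟩ | ⟨Q, hQ, rfl⟩
      · exact h1 V hVo ha
      · exact h2 Q hQ ha
    | univ => exact fun _ => univ_mem
    | inter s t _ _ ihs iht => exact fun ha => inter_mem (ihs ha.1) (iht ha.2)
    | sUnion T _ ih => rintro ⟨t, htT, hat⟩; exact mem_of_superset (ih t htT hat) (subset_sUnion_of_mem htT)
  intro s hs
  obtain ⟨U, hUs, hUo, haU⟩ := mem_nhds_iff.mp hs
  exact mem_of_superset (key U (hgen U hUo) haU) hUs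

end Sep

section Concrete

variable {X : Type*} [TopologicalSpace X]

lemma hopV_H : ∀ V : Set X, IsOpen V → IsOpen {S : HXsp X | (S.1 ∩ V).Nonempty} :=
  fun V hV => TopologicalSpace.GenerateOpen.basic _ (Or.inl ⟨V, hV, rfl⟩)

lemma hopQ_H : ∀ Q : Set X, IsCompact Q → IsOpen {S : HXsp X | S.1 ∩ Q = ∅} :=
  fun Q hQ => TopologicalSpace.GenerateOpen.basic _ (Or.inr ⟨Q, hQ, rfl⟩)

lemma hopV_hat : ∀ V : Set X, IsOpen V → IsOpen {S : hatHX X | (S.1 ∩ V).Nonempty} :=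
  fun V hV => TopologicalSpace.GenerateOpen.basic _ (Or.inl ⟨V, hV, rfl⟩)

lemma hopQ_hat : ∀ Q : Set X, IsCompact Q → IsOpen {S : hatHX X | S.1 ∩ Q = ∅} :=
  fun Q hQ => TopologicalSpace.GenerateOpen.basic _ (Or.inr ⟨Q, hQ, rfl⟩)

lemma hgen_H : ∀ U : Set (HXsp X), IsOpen U → TopologicalSpace.GenerateOpen
    ({A | ∃ V : Set X, IsOpen V ∧ A = {S : HXsp X | ((Subtype.val S : Set X) ∩ V).Nonempty}} ∪
     {A | ∃ Q : Set X, IsCompact Q ∧ A = {S : HXsp X | (Subtype.val S : Set X) ∩ Q = ∅}}) U :=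
  fun _ h => h

lemma hgen_hat : ∀ U : Set (hatHX X), IsOpen U → TopologicalSpace.GenerateOpen
    ({A | ∃ V : Set X, IsOpen V ∧ A = {S : hatHX X | ((Subtype.val S : Set X) ∩ V).Nonempty}} ∪
     {A | ∃ Q : Set X, IsCompact Q ∧ A = {S : hatHX X | (Subtype.val S : Set X) ∩ Q = ∅}}) U :=
  fun _ h => h

/-- Part 1: the set of members of `HX` meeting a quasi-compact set is compact. -/
theorem compact_meet {K : Set X} (hK : IsCompact K) :
    IsCompact {S : HXsp X | (S.1 ∩ K).Nonempty} := by
  rw [isCompact_iff_ultrafilter_le_nhds]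
  intro F hF
  have hFK : {S : HXsp X | (S.1 ∩ K).Nonempty} ∈ F := le_principal_iff.mp hF
  have hmeet := limS_meet (Subtype.val : HXsp X → Set X) F hK hFK
  obtain ⟨x, hxL, hxK⟩ := hmeet
  have hcond := limS_cond (Subtype.val : HXsp X → Set X) F (fun S _ => S.2.2) ⟨x, hxL⟩
  refine ⟨⟨limS Subtype.val F, ⟨x, hxL⟩, hcond⟩, ⟨x, hxL, hxK⟩, ?_⟩
  refine ultra_le_nhds (α := HXsp X) Subtype.val F _ hgen_H ?_ ?_
  · rintro V hVo ⟨y, hy1, hy2⟩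
    exact hy1 V hVo hy2
  · intro Q hQ hQe
    exact limS_avoid Subtype.val F hQ
      (fun z hzQ hzL => by rw [eq_empty_iff_forall_notMem] at hQe; exact hQe z ⟨hzL, hzQ⟩)

theorem compactSpace_hat : CompactSpace (hatHX X) := by
  constructor
  rw [isCompact_iff_ultrafilter_le_nhds]
  intro F _
  have hP : ∀ S : hatHX X, (S.1 : Set X).Nonempty → HXcond S.1 :=
    fun S h => (S.2.resolve_left h.ne_empty).2
  by_cases hne : (limS (Subtype.val : hatHX X → Set X) F).Nonempty
  · refine ⟨⟨limS Subtype.val F, Or.inr ⟨hne, limS_cond _ F hP hne⟩⟩, mem_univ _, ?_⟩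
    refine ultra_le_nhds (α := hatHX X) Subtype.val F _ hgen_hat ?_ ?_
    · rintro V hVo ⟨y, hy1, hy2⟩
      exact hy1 V hVo hy2
    · intro Q hQ hQe
      exact limS_avoid Subtype.val F hQ
        (fun z hzQ hzL => by rw [eq_empty_iff_forall_notMem] at hQe; exact hQe z ⟨hzL, hzQ⟩)
  · rw [not_nonempty_iff_eq_empty] at hne
    refine ⟨⟨∅, Or.inl rfl⟩, mem_univ _, ?_⟩
    refine ultra_le_nhds (α := hatHX X) Subtype.val F _ hgen_hat ?_ ?_
    · rintro V hVo ⟨y, hy, _⟩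
      exact absurd hy (notMem_empty y)
    · intro Q hQ _
      exact limS_avoid Subtype.val F hQ (fun z _ hzL => by rw [hne] at hzL; exact hzL)

theorem t2_H (hX : LocCompact X) : T2Space (HXsp X) :=
  t2_of (Subtype.val : HXsp X → Set X) (fun _ _ h => Subtype.ext h) hopV_H hopQ_H hX
    (fun S => closed_of_cond hX S.2.2)

theorem t2_hat (hX : LocCompact X) : T2Space (hatHX X) :=
  t2_of (Subtype.val : hatHX X → Set X) (fun _ _ h => Subtype.ext h) hopV_hat hopQ_hat hX
    (fun S => S.2.elim (fun h => by rw [h]; exact isClosed_empty) (fun h => closed_of_cond hX h.2))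

theorem wlc_H (hX : LocCompact X) : WeaklyLocallyCompactSpace (HXsp X) := by
  constructor
  intro S
  obtain ⟨x, hxS⟩ := S.2.1
  obtain ⟨K, hKn, hKc, _⟩ := hX x
  refine ⟨{T : HXsp X | (T.1 ∩ K).Nonempty}, compact_meet hKc, ?_⟩
  refine mem_of_superset
    ((hopV_H (interior K) isOpen_interior).mem_nhds ⟨x, hxS, mem_interior_iff_mem_nhds.2 hKn⟩) ?_
  rintro T ⟨y, hy1, hy2⟩
  exact ⟨y, hy1, interior_subset hy2⟩

end Concrete

section Hat

variable {X : Type*} [TopologicalSpace X]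

/-- The inclusion of `HX` into `ĤX`. -/
noncomputable def jmap (S : HXsp X) : hatHX X := ⟨S.1, Or.inr S.2⟩

lemma jmap_inj : Function.Injective (jmap (X := X)) :=
  fun _ _ h => Subtype.ext (congrArg (Subtype.val : hatHX X → Set X) h)

lemma jmap_inducing : IsInducing (jmap (X := X)) := by
  constructor
  have h1 : TopologicalSpace.induced (jmap (X := X)) (inferInstance : TopologicalSpace (hatHX X)) =
      TopologicalSpace.generateFrom (preimage (jmap (X := X)) ''
        ({A | ∃ V : Set X, IsOpen V ∧ A = {S : hatHX X | (S.1 ∩ V).Nonempty}} ∪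
         {A | ∃ Q : Set X, IsCompact Q ∧ A = {S : hatHX X | S.1 ∩ Q = ∅}})) :=
    induced_generateFrom_eq
  have h2 : (inferInstance : TopologicalSpace (HXsp X)) =
      TopologicalSpace.generateFrom
        ({A | ∃ V : Set X, IsOpen V ∧ A = {S : HXsp X | (S.1 ∩ V).Nonempty}} ∪
         {A | ∃ Q : Set X, IsCompact Q ∧ A = {S : HXsp X | S.1 ∩ Q = ∅}}) := rfl
  have hsets : ({A | ∃ V : Set X, IsOpen V ∧ A = {S : HXsp X | (S.1 ∩ V).Nonempty}} ∪
         {A | ∃ Q : Set X, IsCompact Q ∧ A = {S : HXsp X | S.1 ∩ Q = ∅}}) =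
      (preimage (jmap (X := X)) ''
        ({A | ∃ V : Set X, IsOpen V ∧ A = {S : hatHX X | (S.1 ∩ V).Nonempty}} ∪
         {A | ∃ Q : Set X, IsCompact Q ∧ A = {S : hatHX X | S.1 ∩ Q = ∅}})) := ?_
  · exact h2.trans ((congrArg TopologicalSpace.generateFrom hsets).trans h1.symm)
  ext A
  constructor
  · rintro (⟨V, hV, rfl⟩ | ⟨Q, hQ, rfl⟩)
    · exact ⟨{S : hatHX X | (S.1 ∩ V).Nonempty}, Or.inl ⟨V, hV, rfl⟩, rfl⟩
    · exact ⟨{S : hatHX X | S.1 ∩ Q = ∅}, Or.inr ⟨Q, hQ, rfl⟩, rfl⟩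
  · rintro ⟨B, (⟨V, hV, rfl⟩ | ⟨Q, hQ, rfl⟩), rfl⟩
    · exact Or.inl ⟨V, hV, rfl⟩
    · exact Or.inr ⟨Q, hQ, rfl⟩

lemma jmap_range : Set.range (jmap (X := X)) = {T : hatHX X | (T.1 ∩ univ).Nonempty} := by
  ext T
  simp only [mem_range, mem_setOf_eq, inter_univ]
  constructor
  · rintro ⟨S, rfl⟩; exact S.2.1
  · intro h
    exact ⟨⟨T.1, h, (T.2.resolve_left h.ne_empty).2⟩, Subtype.ext rfl⟩

lemma jmap_openEmbedding : Topology.IsOpenEmbedding (jmap (X := X)) := by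
  refine ⟨⟨jmap_inducing, jmap_inj⟩, ?_⟩
  rw [jmap_range]
  exact hopV_hat univ isOpen_univ

end Hat

section Emap

variable {X : Type*} [TopologicalSpace X]

open scoped Classical in
/-- The map `ĤX → OnePoint HX`. -/
noncomputable def emap (T : hatHX X) : OnePoint (HXsp X) :=
  if h : (T.1 : Set X).Nonempty then
    OnePoint.some (⟨T.1, h, (T.2.resolve_left h.ne_empty).2⟩ : HXsp X) else ∞

lemma emap_jmap (S : HXsp X) : emap (jmap S) = OnePoint.some S := by
  rw [emap, dif_pos (show ((jmap S).1 : Set X).Nonempty from S.2.1)]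
  exact congrArg _ (Subtype.ext rfl)

lemma emap_empty : emap (⟨∅, Or.inl rfl⟩ : hatHX X) = ∞ := by
  delta emap
  exact dif_neg Set.not_nonempty_empty

/-- `emap` as an equivalence. -/
noncomputable def eequiv : hatHX X ≃ OnePoint (HXsp X) where
  toFun := emap
  invFun o := Option.elim o ⟨∅, Or.inl rfl⟩ jmap
  left_inv T := by
    by_cases h : (T.1 : Set X).Nonempty
    · rw [emap, dif_pos h]
      exact Subtype.ext rfl
    · rw [emap, dif_neg h]
      exact Subtype.ext (not_nonempty_iff_eq_empty.mp h).symm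
  right_inv o := by
    cases o with
    | infty => exact emap_empty
    | coe S => exact emap_jmap S

lemma emap_continuous (hX : LocCompact X) : Continuous (emap (X := X)) := by
  haveI := t2_hat hX
  rw [continuous_def]
  intro U hU
  by_cases hinf : ∞ ∈ U
  · obtain ⟨hC, _⟩ := (OnePoint.isOpen_iff_of_mem' hinf).mp hU
    have hpre : emap ⁻¹' U = (jmap '' ((OnePoint.some ⁻¹' U : Set (HXsp X))ᶜ))ᶜ := by
      ext T
      by_cases h : (T.1 : Set X).Nonempty
      · have hT : T = jmap ⟨T.1, h, (T.2.resolve_left h.ne_empty).2⟩ := Subtype.ext rfl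
        simp only [mem_preimage, mem_compl_iff, mem_image]
        obtain ⟨S0, rfl⟩ : ∃ S0, T = jmap S0 := ⟨_, hT⟩
        rw [emap_jmap]
        constructor
        · rintro hs ⟨S', hS', hEq⟩
          exact hS' (by rw [jmap_inj hEq]; exact hs)
        · intro hno
          by_contra hs
          exact hno ⟨_, fun hmem => hs hmem, rfl⟩
      · have hT : T = ⟨∅, Or.inl rfl⟩ :=
          Subtype.ext (not_nonempty_iff_eq_empty.mp h)
        simp only [mem_preimage, mem_compl_iff, mem_image]
        rw [hT, emap_empty]
        constructor
        · rintro _ ⟨S', _, hEq⟩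
          obtain ⟨x, hx⟩ := S'.2.1
          have hmem : x ∈ (⟨∅, Or.inl rfl⟩ : hatHX X).1 := by rw [← hEq]; exact hx
          exact absurd hmem (notMem_empty x)
        · intro _; exact hinf
    rw [hpre]
    exact ((hC.image (jmap_openEmbedding.continuous)).isClosed).isOpen_compl
  · have hop : IsOpen (OnePoint.some ⁻¹' U : Set (HXsp X)) := (OnePoint.isOpen_def.mp hU).2
    have hpre : emap ⁻¹' U = jmap '' (OnePoint.some ⁻¹' U : Set (HXsp X)) := by
      ext T
      by_cases h : (T.1 : Set X).Nonempty
      · have hT : T = jmap ⟨T.1, h, (T.2.resolve_left h.ne_empty).2⟩ := Subtype.ext rfl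
        simp only [mem_preimage, mem_image]
        obtain ⟨S0, rfl⟩ : ∃ S0, T = jmap S0 := ⟨_, hT⟩
        rw [emap_jmap]
        constructor
        · intro hs; exact ⟨_, hs, rfl⟩
        · rintro ⟨S', hS', hEq⟩; rwa [← jmap_inj hEq]
      · have hT : T = ⟨∅, Or.inl rfl⟩ := Subtype.ext (not_nonempty_iff_eq_empty.mp h)
        simp only [mem_preimage, mem_image]
        rw [hT, emap_empty]
        constructor
        · intro hs; exact absurd hs hinf
        · rintro ⟨S', _, hEq⟩
          obtain ⟨x, hx⟩ := S'.2.1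
          have hmem : x ∈ (⟨∅, Or.inl rfl⟩ : hatHX X).1 := by rw [← hEq]; exact hx
          exact absurd hmem (notMem_empty x)
    rw [hpre]
    exact jmap_openEmbedding.isOpenMap _ hop

end Emap

/-- For `X` locally compact: the set of `S ∈ HX` meeting a given quasi-compact set
is compact; `HX` is locally compact; `ĤX` is the one-point compactification of `HX`;
and `HX` is σ-compact whenever `X` is. -/
theorem stmt16 {X : Type*} [TopologicalSpace X] (hX : LocCompact X) :
    (∀ K : Set X, IsCompact K → IsCompact {S : HXsp X | (S.1 ∩ K).Nonempty}) ∧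
    LocCompact (HXsp X) ∧
    (∃ φ : hatHX X ≃ₜ OnePoint (HXsp X),
      ∀ S : HXsp X, φ ⟨S.1, Or.inr S.2⟩ = OnePoint.some S) ∧
    ((∃ K : ℕ → Set X, (∀ n, IsCompact (K n)) ∧ ⋃ n, K n = univ) →
      ∃ K : ℕ → Set (HXsp X), (∀ n, IsCompact (K n)) ∧ ⋃ n, K n = univ) := by
  haveI ht2 : T2Space (HXsp X) := t2_H hX
  haveI hwlc : WeaklyLocallyCompactSpace (HXsp X) := wlc_H hX
  haveI : CompactSpace (hatHX X) := compactSpace_hat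
  refine ⟨fun K hK => compact_meet hK, ?_, ?_, ?_⟩
  · intro S
    obtain ⟨x, hxS⟩ := S.2.1
    obtain ⟨K, hKn, hKc, _⟩ := hX x
    refine ⟨{T : HXsp X | (T.1 ∩ K).Nonempty}, ?_, compact_meet hKc, inferInstance⟩
    refine mem_of_superset
      ((hopV_H (interior K) isOpen_interior).mem_nhds
        ⟨x, hxS, mem_interior_iff_mem_nhds.2 hKn⟩) ?_
    rintro T ⟨y, hy1, hy2⟩
    exact ⟨y, hy1, interior_subset hy2⟩
  · haveI : T2Space (OnePoint (HXsp X)) := inferInstance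
    refine ⟨Continuous.homeoOfEquivCompactToT2 (f := eequiv) (emap_continuous hX), ?_⟩
    intro S
    show emap ⟨S.1, Or.inr S.2⟩ = OnePoint.some S
    have h : (⟨S.1, Or.inr S.2⟩ : hatHX X) = jmap S := rfl
    rw [h, emap_jmap]
  · rintro ⟨K, hKc, hKu⟩
    refine ⟨fun n => {S : HXsp X | (S.1 ∩ K n).Nonempty},
      fun n => compact_meet (hKc n), ?_⟩
    ext S
    simp only [mem_iUnion, mem_univ, iff_true]
    obtain ⟨x, hxS⟩ := S.2.1
    have hx : x ∈ ⋃ n, K n := hKu ▸ mem_univ x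
    obtain ⟨n, hn⟩ := mem_iUnion.mp hx
    exact ⟨n, x, hxS, hn⟩
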